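/- Let n ≥ 1, let φ : ℝⁿ → ℝ be twice continuously differentiable with L_H-Lipschitz continuous Hessian (in operator norm), let x, s ∈ ℝⁿ, let g ∈ ℝⁿ and let H : ℝⁿ → ℝⁿ be a symmetric linear map satisfying the accuracy conditions ‖∇φ(x) − g‖ ≤ κ_g·max{μ/σ, ‖s‖²} and ‖(∇²φ(x) − H)s‖ ≤ κ_H·max{μ/σ, ‖s‖²}, where κ_g, κ_H ≥ 0, μ > 0, σ > 0. Then φ(x+s) − φ(x) − ⟨g, s⟩ − (1/2)⟨s, H s⟩ ≤ (κ_g + κ_H/2)·max{μ/σ, ‖s‖²}·‖s‖ + (L_H/2)‖s‖³. -/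

import Mathlib

open RealInnerProductSpace

/-- Taylor-type upper bound on the model error: under the gradient/Hessian
accuracy conditions and Lipschitz continuity of the Hessian,
`φ(x+s) − φ(x) − ⟪g, s⟫ − (1/2)⟪s, H s⟫` is bounded by
`(κ_g + κ_H/2)·max{μ/σ, ‖s‖²}·‖s‖ + (L_H/2)‖s‖³`. -/
theorem sarc_taylor_model_error (n : ℕ) (hn : 1 ≤ n)
    (φ : EuclideanSpace ℝ (Fin n) → ℝ) (hφ : ContDiff ℝ 2 φ)
    (Hess : EuclideanSpace ℝ (Fin n) →
      EuclideanSpace ℝ (Fin n) →L[ℝ] EuclideanSpace ℝ (Fin n))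
    (hHess : ∀ y, HasFDerivAt (gradient φ) (Hess y) y)
    (L_H : ℝ) (hLH : ∀ y z, ‖Hess y - Hess z‖ ≤ L_H * ‖y - z‖)
    (x s g : EuclideanSpace ℝ (Fin n))
    (H : EuclideanSpace ℝ (Fin n) →L[ℝ] EuclideanSpace ℝ (Fin n))
    (hHsym : ∀ u v : EuclideanSpace ℝ (Fin n), ⟪H u, v⟫ = ⟪u, H v⟫)
    (κg κH μ σ : ℝ) (hκg : 0 ≤ κg) (hκH : 0 ≤ κH) (hμ : 0 < μ) (hσ : 0 < σ)
    (hacc_g : ‖gradient φ x - g‖ ≤ κg * max (μ / σ) (‖s‖ ^ 2))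
    (hacc_H : ‖(Hess x - H) s‖ ≤ κH * max (μ / σ) (‖s‖ ^ 2)) :
    φ (x + s) - φ x - ⟪g, s⟫ - (1 / 2) * ⟪s, H s⟫ ≤
      (κg + κH / 2) * max (μ / σ) (‖s‖ ^ 2) * ‖s‖ + (L_H / 2) * ‖s‖ ^ 3 := by
  set G := gradient φ with hGdef
  set M := max (μ / σ) (‖s‖ ^ 2) with hMdef
  have hM0 : 0 ≤ M := le_trans (le_of_lt (div_pos hμ hσ)) (le_max_left _ _)
  -- L_H is nonnegative
  have hL0 : 0 ≤ L_H := by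
    set e : EuclideanSpace ℝ (Fin n) := EuclideanSpace.single ⟨0, hn⟩ (1 : ℝ) with he
    have h := hLH e 0
    have hnorm : ‖e - (0 : EuclideanSpace ℝ (Fin n))‖ = 1 := by
      rw [sub_zero, he, EuclideanSpace.norm_single]
      norm_num
    rw [hnorm, mul_one] at h
    exact le_trans (norm_nonneg _) h
  have hφd : ∀ y, DifferentiableAt ℝ φ y :=
    fun y => (hφ.differentiable two_ne_zero).differentiableAt
  have hGrad : ∀ y, HasGradientAt φ (G y) y := fun y => (hφd y).hasGradientAt
  have hcontG : Continuous G := by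
    rw [continuous_iff_continuousAt]
    exact fun y => (hHess y).differentiableAt.continuousAt
  -- derivative along the line
  have hline : ∀ t : ℝ, HasDerivAt (fun t : ℝ => x + t • s) s t := fun t => by
    simpa using ((hasDerivAt_id t).smul_const s).const_add x
  have hD1 : ∀ t : ℝ, HasDerivAt (fun t => φ (x + t • s)) ⟪G (x + t • s), s⟫ t := by
    intro t
    have h1 := (hGrad (x + t • s)).hasFDerivAt
    have h2 := h1.comp_hasDerivAt t (hline t)
    have h3 : ((InnerProductSpace.toDual ℝ (EuclideanSpace ℝ (Fin n))) (G (x + t • s))) s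
        = ⟪G (x + t • s), s⟫ := InnerProductSpace.toDual_apply_apply
    rw [h3] at h2
    exact h2
  have hcont1 : Continuous (fun t : ℝ => ⟪G (x + t • s), s⟫) := by
    have : Continuous (fun t : ℝ => G (x + t • s)) :=
      hcontG.comp (continuous_const.add (continuous_id.smul continuous_const))
    exact this.inner continuous_const
  have hFTC : φ (x + s) - φ x = ∫ t in (0:ℝ)..1, ⟪G (x + t • s), s⟫ := by
    rw [intervalIntegral.integral_eq_sub_of_hasDerivAt (fun t _ => hD1 t)
      (hcont1.intervalIntegrable 0 1)]
    norm_num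
  -- Lipschitz Hessian bound on gradient increment
  have key : ∀ t ∈ Set.Icc (0:ℝ) 1,
      ‖G (x + t • s) - G x - t • Hess x s‖ ≤ L_H * t ^ 2 * ‖s‖ ^ 2 := by
    intro t ht
    have hconv : Convex ℝ (Metric.closedBall x ‖t • s‖) := convex_closedBall _ _
    have hxmem : x ∈ Metric.closedBall x ‖t • s‖ :=
      Metric.mem_closedBall_self (norm_nonneg _)
    have hymem : x + t • s ∈ Metric.closedBall x ‖t • s‖ := by
      simp [Metric.mem_closedBall, dist_eq_norm]
    have hbd : ∀ z ∈ Metric.closedBall x ‖t • s‖,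
        ‖Hess z - Hess x‖ ≤ L_H * ‖t • s‖ := by
      intro z hz
      refine le_trans (hLH z x) ?_
      have hz' : ‖z - x‖ ≤ ‖t • s‖ := by
        simpa [Metric.mem_closedBall, dist_eq_norm] using hz
      exact mul_le_mul_of_nonneg_left hz' hL0
    have hmvt := hconv.norm_image_sub_le_of_norm_hasFDerivWithin_le
      (f := fun z => G z - Hess x z) (f' := fun z => Hess z - Hess x)
      (fun z _ => ((hHess z).sub (Hess x).hasFDerivAt).hasFDerivWithinAt)
      hbd hxmem hymem
    have heq : (G (x + t • s) - Hess x (x + t • s)) - (G x - Hess x x)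
        = G (x + t • s) - G x - t • Hess x s := by
      rw [map_add, map_smul]
      abel
    rw [heq] at hmvt
    have hts : ‖t • s‖ = t * ‖s‖ := by
      rw [norm_smul, Real.norm_eq_abs, abs_of_nonneg ht.1]
    calc ‖G (x + t • s) - G x - t • Hess x s‖
        ≤ L_H * ‖t • s‖ * ‖(x + t • s) - x‖ := hmvt
      _ = L_H * t ^ 2 * ‖s‖ ^ 2 := by
          have : (x + t • s) - x = t • s := by abel
          rw [this, hts]; ring
  -- pointwise bound on the integrand
  have hpt : ∀ t ∈ Set.Icc (0:ℝ) 1,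
      ⟪G (x + t • s), s⟫ ≤ ⟪G x, s⟫ + t * ⟪Hess x s, s⟫ + L_H * ‖s‖ ^ 3 * t ^ 2 := by
    intro t ht
    have h1 : ⟪G (x + t • s) - G x - t • Hess x s, s⟫ ≤ L_H * ‖s‖ ^ 3 * t ^ 2 := by
      refine le_trans (real_inner_le_norm _ _) ?_
      calc ‖G (x + t • s) - G x - t • Hess x s‖ * ‖s‖
          ≤ (L_H * t ^ 2 * ‖s‖ ^ 2) * ‖s‖ :=
            mul_le_mul_of_nonneg_right (key t ht) (norm_nonneg _)
        _ = L_H * ‖s‖ ^ 3 * t ^ 2 := by ring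
    have h2 : ⟪G (x + t • s) - G x - t • Hess x s, s⟫
        = ⟪G (x + t • s), s⟫ - ⟪G x, s⟫ - t * ⟪Hess x s, s⟫ := by
      rw [inner_sub_left, inner_sub_left, real_inner_smul_left]
    linarith [h1, h2.symm.le, h2.le]
  -- integrate
  have hint : φ (x + s) - φ x ≤ ⟪G x, s⟫ + (1/2) * ⟪Hess x s, s⟫ + L_H / 3 * ‖s‖ ^ 3 := by
    rw [hFTC]
    have hmono : (∫ t in (0:ℝ)..1, ⟪G (x + t • s), s⟫)
        ≤ ∫ t in (0:ℝ)..1, (⟪G x, s⟫ + t * ⟪Hess x s, s⟫ + L_H * ‖s‖ ^ 3 * t ^ 2) := by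
      apply intervalIntegral.integral_mono_on (by norm_num)
        (hcont1.intervalIntegrable 0 1)
      · exact ((continuous_const.add ((continuous_id.mul continuous_const))).add
          (continuous_const.mul (continuous_pow 2))).intervalIntegrable 0 1
      · exact hpt
    refine le_trans hmono (le_of_eq ?_)
    rw [intervalIntegral.integral_add, intervalIntegral.integral_add]
    · rw [intervalIntegral.integral_const, intervalIntegral.integral_mul_const,
        intervalIntegral.integral_const_mul, integral_id, integral_pow]
      norm_num
      ring
    · exact (continuous_const).intervalIntegrable 0 1
    · exact ((continuous_id.mul continuous_const)).intervalIntegrable 0 1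
    · exact ((continuous_const.add (continuous_id.mul continuous_const))).intervalIntegrable 0 1
    · exact (continuous_const.mul (continuous_pow 2)).intervalIntegrable 0 1
  -- error terms
  have herr1 : ⟪G x, s⟫ - ⟪g, s⟫ ≤ κg * M * ‖s‖ := by
    have : ⟪G x - g, s⟫ ≤ ‖G x - g‖ * ‖s‖ := real_inner_le_norm _ _
    rw [inner_sub_left] at this
    refine le_trans this ?_
    exact mul_le_mul_of_nonneg_right hacc_g (norm_nonneg _)
  have herr2 : ⟪Hess x s, s⟫ - ⟪s, H s⟫ ≤ κH * M * ‖s‖ := by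
    have hsym : ⟪s, H s⟫ = ⟪H s, s⟫ := real_inner_comm _ _
    have : ⟪(Hess x - H) s, s⟫ ≤ ‖(Hess x - H) s‖ * ‖s‖ := real_inner_le_norm _ _
    rw [ContinuousLinearMap.sub_apply, inner_sub_left] at this
    rw [hsym]
    refine le_trans this ?_
    exact mul_le_mul_of_nonneg_right hacc_H (norm_nonneg _)
  have hcube : L_H / 3 * ‖s‖ ^ 3 ≤ L_H / 2 * ‖s‖ ^ 3 := by
    have : (0:ℝ) ≤ ‖s‖ ^ 3 := by positivity
    nlinarith
  nlinarith [hint, herr1, herr2, hcube]
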